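/- Let (u_t)_{t≥0} be a sequence of nonnegative reals satisfying u_t ≤ ρ(u_{t−1} + K/(t+1)) for all t ≥ 1, where 0 < ρ < 1 and K > 0. Then for all t ≥ 2, u_t ≤ K(ρ/(1−ρ) · 2/(t+2) + ρ^{t/2} log t) + ρ^t u_0. -/

import Mathlib

open Finset

theorem stmt_1 (ρ K : ℝ) (hρ : 0 < ρ) (hρ1 : ρ < 1) (hK : 0 < K)
    (u : ℕ → ℝ) (hu : ∀ t, 0 ≤ u t)
    (hrec : ∀ t : ℕ, 1 ≤ t → u t ≤ ρ * (u (t - 1) + K / (t + 1))) :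
    ∀ t : ℕ, 2 ≤ t →
      u t ≤ K * (ρ / (1 - ρ) * (2 / (t + 2)) + ρ ^ ((t : ℝ) / 2) * Real.log t)
            + ρ ^ t * u 0 := by
  have hρ1' : (0:ℝ) < 1 - ρ := by linarith
  -- unrolling the recursion
  have unroll : ∀ n : ℕ, u n ≤ ρ ^ n * u 0 +
      ∑ s ∈ Icc 1 n, ρ ^ (n - s + 1) * (K / ((s:ℝ)+1)) := by
    intro n
    induction n with
    | zero => simp
    | succ n ih =>
      have h1 := hrec (n+1) (by omega)
      simp only [Nat.add_sub_cancel] at h1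
      push_cast at h1
      have hsum : ∑ s ∈ Icc 1 (n+1), ρ ^ (n+1 - s + 1) * (K / ((s:ℝ)+1))
          = ρ * (∑ s ∈ Icc 1 n, ρ ^ (n - s + 1) * (K / ((s:ℝ)+1)))
            + ρ * (K / ((n:ℝ)+1+1)) := by
        rw [Finset.sum_Icc_succ_top (by omega), Finset.mul_sum]
        congr 1
        · apply Finset.sum_congr rfl
          intro s hs
          have hs' : s ≤ n := (Finset.mem_Icc.mp hs).2
          have he : n + 1 - s + 1 = (n - s + 1) + 1 := by omega
          rw [he, pow_succ]
          push_cast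
          ring
        · have he : n + 1 - (n+1) + 1 = 1 := by omega
          rw [he]
          push_cast
          ring
      rw [hsum, pow_succ]
      have h2 : ρ * (u n + K / ((n:ℝ)+1+1)) ≤
          ρ * ((ρ ^ n * u 0 + ∑ s ∈ Icc 1 n, ρ ^ (n - s + 1) * (K / ((s:ℝ)+1)))
            + K / ((n:ℝ)+1+1)) := by
        apply mul_le_mul_of_nonneg_left _ hρ.le
        linarith
      calc u (n+1) ≤ ρ * (u n + K / ((n:ℝ)+1+1)) := h1
        _ ≤ _ := by nlinarith [h2]
  -- geometric sum bound
  have geom : ∀ (n a : ℕ), (∑ s ∈ Icc a n, ρ ^ (n - s + 1)) ≤ ρ / (1 - ρ) := by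
    intro n
    induction n with
    | zero =>
      intro a
      match a with
      | 0 =>
        simp only [Finset.Icc_self, Finset.sum_singleton]
        norm_num
        rw [le_div_iff₀ hρ1']
        nlinarith
      | a+1 =>
        rw [Finset.Icc_eq_empty (by omega)]
        simp
        positivity
    | succ n ih =>
      intro a
      by_cases ha : a ≤ n + 1
      · rw [Finset.sum_Icc_succ_top ha]
        have hsum : ∑ s ∈ Icc a n, ρ ^ (n + 1 - s + 1)
            = ρ * ∑ s ∈ Icc a n, ρ ^ (n - s + 1) := by
          rw [Finset.mul_sum]
          apply Finset.sum_congr rfl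
          intro s hs
          have hs' : s ≤ n := (Finset.mem_Icc.mp hs).2
          have he : n + 1 - s + 1 = (n - s + 1) + 1 := by omega
          rw [he, pow_succ]; ring
        have he : n + 1 - (n+1) + 1 = 1 := by omega
        rw [hsum, he, pow_one]
        have h3 : ρ * (ρ / (1 - ρ)) + ρ = ρ / (1 - ρ) := by
          field_simp
          ring
        have h4 : ρ * ∑ s ∈ Icc a n, ρ ^ (n - s + 1) ≤ ρ * (ρ / (1 - ρ)) :=
          mul_le_mul_of_nonneg_left (ih a) hρ.le
        linarith
      · rw [Finset.Icc_eq_empty (by omega)]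
        simp
        positivity
  -- harmonic sum bound
  have harm : ∀ m : ℕ, (∑ s ∈ Icc 1 m, (1:ℝ)/((s:ℝ)+1)) ≤ Real.log ((m:ℝ)+1) := by
    intro m
    induction m with
    | zero => simp
    | succ m ih =>
      rw [Finset.sum_Icc_succ_top (by omega)]
      have hx : (0:ℝ) < (m:ℝ)+1 := by positivity
      have hx2 : (0:ℝ) < (m:ℝ)+2 := by positivity
      have h := Real.log_le_sub_one_of_pos (show (0:ℝ) < ((m:ℝ)+1)/((m:ℝ)+2) by positivity)
      rw [Real.log_div hx.ne' hx2.ne'] at h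
      have heq : ((m:ℝ)+1)/((m:ℝ)+2) - 1 = -(1/((m:ℝ)+2)) := by
        field_simp
        norm_num
      rw [heq] at h
      push_cast
      have h2 : (1:ℝ)/((m:ℝ)+1+1) ≤ Real.log ((m:ℝ)+1+1) - Real.log ((m:ℝ)+1) := by
        rw [show ((m:ℝ)+1+1) = (m:ℝ)+2 by ring]
        linarith
      linarith
  intro t ht
  set m : ℕ := t / 2 with hm
  have hm1 : 1 ≤ m := by omega
  have hm2 : m ≤ t := by omega
  have hmt : m + 1 ≤ t := by omega
  have htpos : (0:ℝ) < (t:ℝ) := by positivity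
  -- split the sum
  have hsplit : (∑ s ∈ Icc 1 t, ρ ^ (t - s + 1) * (K / ((s:ℝ)+1)))
      = (∑ s ∈ Icc 1 m, ρ ^ (t - s + 1) * (K / ((s:ℝ)+1)))
        + ∑ s ∈ Icc (m+1) t, ρ ^ (t - s + 1) * (K / ((s:ℝ)+1)) := by
    rw [show (1:ℕ) = 0 + 1 from rfl, Finset.Icc_add_one_left_eq_Ioc, Finset.Icc_add_one_left_eq_Ioc,
      show Icc (m + (0 + 1)) t = Ioc m t by rw [← Finset.Icc_add_one_left_eq_Ioc]; rfl, Finset.sum_Ioc_consecutive _ (Nat.zero_le m) hm2]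
  -- tail bound
  have tail : (∑ s ∈ Icc (m+1) t, ρ ^ (t - s + 1) * (K / ((s:ℝ)+1)))
      ≤ (ρ / (1 - ρ)) * (K * (2 / ((t:ℝ)+2))) := by
    calc (∑ s ∈ Icc (m+1) t, ρ ^ (t - s + 1) * (K / ((s:ℝ)+1)))
        ≤ ∑ s ∈ Icc (m+1) t, ρ ^ (t - s + 1) * (K * (2 / ((t:ℝ)+2))) := by
          apply Finset.sum_le_sum
          intro s hs
          have hs' := Finset.mem_Icc.mp hs
          have hts : t ≤ 2 * s := by omega
          have hts' : (t:ℝ) ≤ 2 * s := by exact_mod_cast hts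
          apply mul_le_mul_of_nonneg_left _ (by positivity)
          rw [div_le_iff₀ (by positivity)]
          rw [show K * (2 / ((t:ℝ)+2)) * ((s:ℝ)+1) = K * (2*((s:ℝ)+1)) / ((t:ℝ)+2) by ring,
            le_div_iff₀ (by positivity)]
          nlinarith
      _ = (∑ s ∈ Icc (m+1) t, ρ ^ (t - s + 1)) * (K * (2 / ((t:ℝ)+2))) := by
          rw [Finset.sum_mul]
      _ ≤ (ρ / (1 - ρ)) * (K * (2 / ((t:ℝ)+2))) := by
          apply mul_le_mul_of_nonneg_right (geom t (m+1))
          positivity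
  -- head bound
  have head : (∑ s ∈ Icc 1 m, ρ ^ (t - s + 1) * (K / ((s:ℝ)+1)))
      ≤ ρ ^ ((t:ℝ)/2) * K * Real.log t := by
    calc (∑ s ∈ Icc 1 m, ρ ^ (t - s + 1) * (K / ((s:ℝ)+1)))
        ≤ ∑ s ∈ Icc 1 m, ρ ^ ((t:ℝ)/2) * (K / ((s:ℝ)+1)) := by
          apply Finset.sum_le_sum
          intro s hs
          have hs' := Finset.mem_Icc.mp hs
          apply mul_le_mul_of_nonneg_right _ (by positivity)
          have hle : t ≤ 2 * (t - s + 1) := by omega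
          have hle' : (t:ℝ) ≤ 2 * ((t - s + 1 : ℕ) : ℝ) := by exact_mod_cast hle
          calc ρ ^ (t - s + 1) = ρ ^ ((t - s + 1 : ℕ) : ℝ) :=
                (Real.rpow_natCast ρ _).symm
            _ ≤ ρ ^ ((t:ℝ)/2) := by
                apply Real.rpow_le_rpow_of_exponent_ge hρ hρ1.le
                linarith
      _ = ρ ^ ((t:ℝ)/2) * K * ∑ s ∈ Icc 1 m, (1:ℝ)/((s:ℝ)+1) := by
          rw [Finset.mul_sum]
          apply Finset.sum_congr rfl
          intro s hs
          ring
      _ ≤ ρ ^ ((t:ℝ)/2) * K * Real.log ((m:ℝ)+1) := by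
          apply mul_le_mul_of_nonneg_left (harm m)
          have := Real.rpow_nonneg hρ.le ((t:ℝ)/2)
          positivity
      _ ≤ ρ ^ ((t:ℝ)/2) * K * Real.log t := by
          apply mul_le_mul_of_nonneg_left _ (by positivity)
          apply Real.log_le_log (by positivity)
          have : (m:ℝ) + 1 ≤ (t:ℝ) := by exact_mod_cast hmt
          linarith
  have := unroll t
  rw [hsplit] at this
  have hgoal : K * (ρ / (1 - ρ) * (2 / ((t:ℝ) + 2)) + ρ ^ ((t : ℝ) / 2) * Real.log t)
      = (ρ ^ ((t:ℝ)/2) * K * Real.log t) + (ρ / (1 - ρ)) * (K * (2 / ((t:ℝ)+2))) := by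
    ring
  calc u t ≤ _ := this
    _ ≤ K * (ρ / (1 - ρ) * (2 / ((t:ℝ) + 2)) + ρ ^ ((t : ℝ) / 2) * Real.log t)
          + ρ ^ t * u 0 := by
        rw [hgoal]; linarith
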